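/- arXiv:1705.08693 — 5 statements merged into one kernel-verified Lean document; each statement's English description precedes it below -/
import Mathlib

section
/- If V is C⁶ on ℝ \ {0}, the one-sided limits of V^{(k)} at 0 exist and are finite for 3 ≤ k ≤ 6, and x⁴ V^{(6)}(x) → 0 as |x| → +∞, and moreover lim_{x→±∞} V''(x) exist and are finite, then for each k with 3 ≤ k ≤ 6 one has x^{k-2} V^{(k)}(x) → 0 as |x| → +∞. -/
open Filter Topology Set

/-- On a set `s` with unique differentiability contained in an open set `u` where `f` is `Cⁿ`,
the iterated derivative within `s` coincides with the global iterated derivative. -/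
private lemma iDW_eq {n : ℕ} {f : ℝ → ℝ} {s u : Set ℝ}
    (hu : IsOpen u) (hf : ContDiffOn ℝ n f u) (hs : UniqueDiffOn ℝ s) (hsu : s ⊆ u) {x : ℝ}
    (hx : x ∈ s) : iteratedDerivWithin n f s x = iteratedDeriv n f x := by
  have h1 : HasFTaylorSeriesUpToOn n f (ftaylorSeriesWithin ℝ f u) u :=
    hf.ftaylorSeriesWithin hu.uniqueDiffOn
  have h2 := (h1.mono hsu).eq_iteratedFDerivWithin_of_uniqueDiffOn (le_refl (n : WithTop ℕ∞)) hs hx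
  have h3 : ftaylorSeriesWithin ℝ f u x n = iteratedFDeriv ℝ n f x := by
    have := iteratedFDerivWithin_of_isOpen (𝕜 := ℝ) (f := f) n hu (hsu hx)
    simpa [ftaylorSeriesWithin] using this
  rw [iteratedDerivWithin_eq_iteratedFDerivWithin, iteratedDeriv_eq_iteratedFDeriv, ← h2, h3]

private lemma taylor4 {g : ℝ → ℝ} (hg : ContDiffOn ℝ 4 g (Ioi 0)) {x y : ℝ}
    (hx : 0 < x) (hxy : x < y) :
    ∃ ξ ∈ Ioo x y, g y = g x + (y - x) * iteratedDeriv 1 g x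
      + (y - x) ^ 2 / 2 * iteratedDeriv 2 g x + (y - x) ^ 3 / 6 * iteratedDeriv 3 g x
      + (y - x) ^ 4 / 24 * iteratedDeriv 4 g ξ := by
  have hsub : Icc x y ⊆ Ioi 0 := fun z hz => lt_of_lt_of_le hx hz.1
  have hf : ContDiffOn ℝ 3 g (Icc x y) := (hg.of_le (by norm_num)).mono hsub
  have e3 : iteratedDeriv 3 g = deriv (deriv (deriv g)) := by
    rw [iteratedDeriv_eq_iterate]; rfl
  have hd3 : ContDiffOn ℝ 1 (iteratedDeriv 3 g) (Ioi 0) := by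
    rw [e3]
    exact ((hg.deriv_of_isOpen (m := 3) isOpen_Ioi (by norm_num)).deriv_of_isOpen (m := 2)
      isOpen_Ioi (by norm_num)).deriv_of_isOpen (m := 1) isOpen_Ioi (by norm_num)
  have hf' : DifferentiableOn ℝ (iteratedDerivWithin 3 g (Icc x y)) (Ioo x y) := by
    have hdo : DifferentiableOn ℝ (iteratedDeriv 3 g) (Ioo x y) :=
      (hd3.differentiableOn (by norm_num)).mono fun z hz => hsub (Ioo_subset_Icc_self hz)
    exact hdo.congr fun z hz =>
      iDW_eq (n := 3) isOpen_Ioi (hg.of_le (by norm_num)) (uniqueDiffOn_Icc hxy) hsub (Ioo_subset_Icc_self hz)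
  obtain ⟨ξ, hξ, H⟩ := taylor_mean_remainder_lagrange (n := 3) hxy.ne
    (by rwa [uIcc_of_le hxy.le]) (by rwa [uIcc_of_le hxy.le, uIoo_of_le hxy.le])
  rw [uIoo_of_le hxy.le] at hξ
  rw [uIcc_of_le hxy.le] at H
  refine ⟨ξ, hξ, ?_⟩
  rw [taylor_within_apply] at H
  have hx' : x ∈ Icc x y := left_mem_Icc.2 hxy.le
  have e : ∀ k : ℕ, k ≤ 4 → iteratedDerivWithin k g (Icc x y) x = iteratedDeriv k g x := by
    intro k hk
    exact iDW_eq isOpen_Ioi (hg.of_le (by exact_mod_cast hk)) (uniqueDiffOn_Icc hxy) hsub hx'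
  have e4 : iteratedDerivWithin 4 g (Icc x y) ξ = iteratedDeriv 4 g ξ :=
    iDW_eq isOpen_Ioi hg (uniqueDiffOn_Icc hxy) hsub (Ioo_subset_Icc_self hξ)
  rw [Finset.sum_range_succ, Finset.sum_range_succ, Finset.sum_range_succ,
    Finset.sum_range_one] at H
  rw [e 0 (by norm_num), e 1 (by norm_num), e 2 (by norm_num), e 3 (by norm_num)] at H
  rw [show (3 : ℕ) + 1 = 4 from rfl, e4] at H
  rw [iteratedDeriv_zero] at H
  rw [iteratedDeriv_one]
  norm_num [Nat.factorial] at H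
  linear_combination H

set_option maxHeartbeats 1000000 in
private lemma key {g : ℝ → ℝ} (hg : ContDiffOn ℝ 4 g (Ioi 0))
    (h0 : Tendsto g atTop (𝓝 0))
    (h4 : Tendsto (fun x => x ^ 4 * iteratedDeriv 4 g x) atTop (𝓝 0))
    (c1 c2 c3 d1 d2 d3 : ℝ)
    (e1 : c1 + 2 * c2 + 3 * c3 = d1)
    (e2 : c1 / 2 + 2 * c2 + (9 / 2) * c3 = d2)
    (e3 : c1 / 6 + (4 / 3) * c2 + (9 / 2) * c3 = d3) :
    Tendsto (fun x => d1 * (x * iteratedDeriv 1 g x) + d2 * (x ^ 2 * iteratedDeriv 2 g x)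
      + d3 * (x ^ 3 * iteratedDeriv 3 g x)) atTop (𝓝 0) := by
  rw [Metric.tendsto_atTop]
  intro ε hε
  set C : ℝ := (|c1| + |c2| * 16 + |c3| * 81) / 24 + 1 with hC
  have hCpos : 0 < C := by positivity
  obtain ⟨N4, hN4⟩ := Metric.tendsto_atTop.1 h4 (ε / (2 * C)) (by positivity)
  have h2x : Tendsto (fun x : ℝ => g (2 * x)) atTop (𝓝 0) :=
    h0.comp (tendsto_id.const_mul_atTop (by norm_num : (0:ℝ) < 2))
  have h3x : Tendsto (fun x : ℝ => g (3 * x)) atTop (𝓝 0) :=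
    h0.comp (tendsto_id.const_mul_atTop (by norm_num : (0:ℝ) < 3))
  have h4x : Tendsto (fun x : ℝ => g (4 * x)) atTop (𝓝 0) :=
    h0.comp (tendsto_id.const_mul_atTop (by norm_num : (0:ℝ) < 4))
  have hT : Tendsto (fun x => c1 * (g (2 * x) - g x) + c2 * (g (3 * x) - g x)
      + c3 * (g (4 * x) - g x)) atTop (𝓝 0) := by
    have := (((h2x.sub h0).const_mul c1).add ((h3x.sub h0).const_mul c2)).add
      ((h4x.sub h0).const_mul c3)
    simpa using this
  obtain ⟨N0, hN0⟩ := Metric.tendsto_atTop.1 hT (ε / 2) (by positivity)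
  refine ⟨max (max N0 N4) 1, fun x hx => ?_⟩
  have hx1 : (1 : ℝ) ≤ x := le_trans (le_max_right _ _) hx
  have hxpos : 0 < x := lt_of_lt_of_le one_pos hx1
  have hxN0 : N0 ≤ x := le_trans (le_trans (le_max_left _ _) (le_max_left _ _)) hx
  have hxN4 : N4 ≤ x := le_trans (le_trans (le_max_right _ _) (le_max_left _ _)) hx
  obtain ⟨ξ1, hξ1, H1⟩ := taylor4 hg hxpos (by linarith : x < 2 * x)
  obtain ⟨ξ2, hξ2, H2⟩ := taylor4 hg hxpos (by linarith : x < 3 * x)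
  obtain ⟨ξ3, hξ3, H3⟩ := taylor4 hg hxpos (by linarith : x < 4 * x)
  -- bound on the remainder evaluated at any ξ > x
  have rem : ∀ ξ : ℝ, x < ξ → x ^ 4 * |iteratedDeriv 4 g ξ| ≤ ε / (2 * C) := by
    intro ξ hξx
    have hξpos : 0 < ξ := lt_trans hxpos hξx
    have hN : |ξ ^ 4 * iteratedDeriv 4 g ξ| ≤ ε / (2 * C) := by
      have := hN4 ξ (le_trans hxN4 hξx.le)
      rw [Real.dist_eq, sub_zero] at this
      exact this.le
    have hx4 : x ^ 4 ≤ ξ ^ 4 := pow_le_pow_left₀ hxpos.le hξx.le 4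
    calc x ^ 4 * |iteratedDeriv 4 g ξ| ≤ ξ ^ 4 * |iteratedDeriv 4 g ξ| :=
          mul_le_mul_of_nonneg_right hx4 (abs_nonneg _)
      _ = |ξ ^ 4 * iteratedDeriv 4 g ξ| := by rw [abs_mul, abs_pow, abs_of_nonneg hξpos.le]
      _ ≤ ε / (2 * C) := hN
  -- the main algebraic identity
  have key_id : d1 * (x * iteratedDeriv 1 g x) + d2 * (x ^ 2 * iteratedDeriv 2 g x)
      + d3 * (x ^ 3 * iteratedDeriv 3 g x)
      = (c1 * (g (2 * x) - g x) + c2 * (g (3 * x) - g x) + c3 * (g (4 * x) - g x))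
        - (c1 * ((2 * x - x) ^ 4 / 24 * iteratedDeriv 4 g ξ1)
          + c2 * ((3 * x - x) ^ 4 / 24 * iteratedDeriv 4 g ξ2)
          + c3 * ((4 * x - x) ^ 4 / 24 * iteratedDeriv 4 g ξ3)) := by
    linear_combination (-c1) * H1 + (-c2) * H2 + (-c3) * H3
      - (x * iteratedDeriv 1 g x) * e1 - (x ^ 2 * iteratedDeriv 2 g x) * e2
      - (x ^ 3 * iteratedDeriv 3 g x) * e3
  rw [Real.dist_eq, sub_zero, key_id]
  have hTx : |c1 * (g (2 * x) - g x) + c2 * (g (3 * x) - g x) + c3 * (g (4 * x) - g x)| < ε / 2 := by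
    have := hN0 x hxN0
    rwa [Real.dist_eq, sub_zero] at this
  have hE1 : |c1 * ((2 * x - x) ^ 4 / 24 * iteratedDeriv 4 g ξ1)|
      ≤ |c1| * (1 / 24) * (ε / (2 * C)) := by
    have h := rem ξ1 hξ1.1
    have : |(2 * x - x) ^ 4 / 24 * iteratedDeriv 4 g ξ1|
        = (1 / 24) * (x ^ 4 * |iteratedDeriv 4 g ξ1|) := by
      rw [abs_mul, abs_of_nonneg (by positivity : (0:ℝ) ≤ (2 * x - x) ^ 4 / 24)]; ring
    rw [abs_mul, this]
    have := mul_le_mul_of_nonneg_left h (by norm_num : (0:ℝ) ≤ 1 / 24)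
    nlinarith [abs_nonneg c1, mul_le_mul_of_nonneg_left this (abs_nonneg c1)]
  have hE2 : |c2 * ((3 * x - x) ^ 4 / 24 * iteratedDeriv 4 g ξ2)|
      ≤ |c2| * (16 / 24) * (ε / (2 * C)) := by
    have h := rem ξ2 hξ2.1
    have : |(3 * x - x) ^ 4 / 24 * iteratedDeriv 4 g ξ2|
        = (16 / 24) * (x ^ 4 * |iteratedDeriv 4 g ξ2|) := by
      rw [abs_mul, abs_of_nonneg (by positivity : (0:ℝ) ≤ (3 * x - x) ^ 4 / 24)]; ring
    rw [abs_mul, this]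
    have := mul_le_mul_of_nonneg_left h (by norm_num : (0:ℝ) ≤ 16 / 24)
    nlinarith [abs_nonneg c2, mul_le_mul_of_nonneg_left this (abs_nonneg c2)]
  have hE3 : |c3 * ((4 * x - x) ^ 4 / 24 * iteratedDeriv 4 g ξ3)|
      ≤ |c3| * (81 / 24) * (ε / (2 * C)) := by
    have h := rem ξ3 hξ3.1
    have : |(4 * x - x) ^ 4 / 24 * iteratedDeriv 4 g ξ3|
        = (81 / 24) * (x ^ 4 * |iteratedDeriv 4 g ξ3|) := by
      rw [abs_mul, abs_of_nonneg (by positivity : (0:ℝ) ≤ (4 * x - x) ^ 4 / 24)]; ring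
    rw [abs_mul, this]
    have := mul_le_mul_of_nonneg_left h (by norm_num : (0:ℝ) ≤ 81 / 24)
    nlinarith [abs_nonneg c3, mul_le_mul_of_nonneg_left this (abs_nonneg c3)]
  have hEsum : |c1| * (1 / 24) * (ε / (2 * C)) + |c2| * (16 / 24) * (ε / (2 * C))
      + |c3| * (81 / 24) * (ε / (2 * C)) ≤ ε / 2 := by
    have hsum : |c1| * (1 / 24) + |c2| * (16 / 24) + |c3| * (81 / 24) ≤ C := by
      rw [hC]; nlinarith [abs_nonneg c1, abs_nonneg c2, abs_nonneg c3]
    have hpos : 0 < ε / (2 * C) := by positivity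
    have := mul_le_mul_of_nonneg_right hsum hpos.le
    calc |c1| * (1 / 24) * (ε / (2 * C)) + |c2| * (16 / 24) * (ε / (2 * C))
          + |c3| * (81 / 24) * (ε / (2 * C))
        = (|c1| * (1 / 24) + |c2| * (16 / 24) + |c3| * (81 / 24)) * (ε / (2 * C)) := by ring
      _ ≤ C * (ε / (2 * C)) := this
      _ = ε / 2 := by field_simp
  calc |(c1 * (g (2 * x) - g x) + c2 * (g (3 * x) - g x) + c3 * (g (4 * x) - g x))
        - (c1 * ((2 * x - x) ^ 4 / 24 * iteratedDeriv 4 g ξ1)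
          + c2 * ((3 * x - x) ^ 4 / 24 * iteratedDeriv 4 g ξ2)
          + c3 * ((4 * x - x) ^ 4 / 24 * iteratedDeriv 4 g ξ3))|
      ≤ |c1 * (g (2 * x) - g x) + c2 * (g (3 * x) - g x) + c3 * (g (4 * x) - g x)|
        + |c1 * ((2 * x - x) ^ 4 / 24 * iteratedDeriv 4 g ξ1)
          + c2 * ((3 * x - x) ^ 4 / 24 * iteratedDeriv 4 g ξ2)
          + c3 * ((4 * x - x) ^ 4 / 24 * iteratedDeriv 4 g ξ3)| := abs_sub _ _
    _ ≤ |c1 * (g (2 * x) - g x) + c2 * (g (3 * x) - g x) + c3 * (g (4 * x) - g x)|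
        + (|c1 * ((2 * x - x) ^ 4 / 24 * iteratedDeriv 4 g ξ1)|
          + |c2 * ((3 * x - x) ^ 4 / 24 * iteratedDeriv 4 g ξ2)|
          + |c3 * ((4 * x - x) ^ 4 / 24 * iteratedDeriv 4 g ξ3)|) := by
        gcongr
        exact (abs_add_three _ _ _)
    _ < ε := by linarith

private lemma iter_id (F : ℝ → ℝ) (a : ℝ) :
    ∀ m : ℕ, iteratedDeriv (m + 1) (fun x => iteratedDeriv 2 F x - a) = iteratedDeriv (m + 3) F := by
  intro m
  induction m with
  | zero =>
    funext x
    rw [iteratedDeriv_one]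
    conv_rhs => rw [show (0 : ℕ) + 3 = 2 + 1 from rfl, iteratedDeriv_succ]
    exact deriv_sub_const (f := iteratedDeriv 2 F) a
  | succ n ih =>
    rw [show n + 1 + 1 = (n + 1) + 1 from rfl, iteratedDeriv_succ, ih,
      ← iteratedDeriv_succ, show n + 3 + 1 = n + 1 + 3 by omega]

private lemma main_top (V : ℝ → ℝ) (a : ℝ) (hC6 : ContDiffOn ℝ 6 V {0}ᶜ)
    (hatop : Tendsto (iteratedDeriv 2 V) atTop (𝓝 a))
    (h6top : Tendsto (fun x => x ^ 4 * iteratedDeriv 6 V x) atTop (𝓝 0)) :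
    ∀ k : ℕ, 3 ≤ k → k ≤ 6 → Tendsto (fun x => x ^ (k - 2) * iteratedDeriv k V x) atTop (𝓝 0) := by
  have hid : ∀ m : ℕ, iteratedDeriv (m + 1) (fun x => iteratedDeriv 2 V x - a)
      = iteratedDeriv (m + 3) V := iter_id V a
  have hV2 : ContDiffOn ℝ 4 (iteratedDeriv 2 V) {0}ᶜ := by
    have h2 : iteratedDeriv 2 V = deriv (deriv V) := by rw [iteratedDeriv_eq_iterate]; rfl
    rw [h2]
    exact (hC6.deriv_of_isOpen (m := 5) isOpen_compl_singleton (by norm_num)).deriv_of_isOpen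
      (m := 4) isOpen_compl_singleton (by norm_num)
  have hg : ContDiffOn ℝ 4 (fun x => iteratedDeriv 2 V x - a) (Ioi 0) :=
    (hV2.sub contDiffOn_const).mono fun x hx =>
      Set.mem_compl_singleton_iff.mpr (ne_of_gt hx)
  have h0 : Tendsto (fun x => iteratedDeriv 2 V x - a) atTop (𝓝 0) := by
    simpa using hatop.sub_const a
  have h4 : Tendsto (fun x => x ^ 4 * iteratedDeriv 4 (fun x => iteratedDeriv 2 V x - a) x)
      atTop (𝓝 0) := by
    have h := hid 3
    rw [show (3 : ℕ) + 1 = 4 from rfl, show (3 : ℕ) + 3 = 6 from rfl] at h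
    rw [h]; exact h6top
  intro k hk3 hk6
  interval_cases k
  · have := key hg h0 h4 3 (-3/2) (1/3) 1 0 0 (by norm_num) (by norm_num) (by norm_num)
    simp only [one_mul, zero_mul, add_zero] at this
    have h1 := hid 0
    rw [show (0 : ℕ) + 1 = 1 from rfl, show (0 : ℕ) + 3 = 3 from rfl] at h1
    rw [h1] at this
    simpa using this
  · have := key hg h0 h4 (-5) 4 (-1) 0 1 0 (by norm_num) (by norm_num) (by norm_num)
    simp only [one_mul, zero_mul, add_zero, zero_add] at this
    have h2 := hid 1
    rw [show (1 : ℕ) + 1 = 2 from rfl, show (1 : ℕ) + 3 = 4 from rfl] at h2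
    rw [h2] at this
    simpa using this
  · have := key hg h0 h4 3 (-3) 1 0 0 1 (by norm_num) (by norm_num) (by norm_num)
    simp only [one_mul, zero_mul, add_zero, zero_add] at this
    have h3 := hid 2
    rw [show (2 : ℕ) + 1 = 3 from rfl, show (2 : ℕ) + 3 = 5 from rfl] at h3
    rw [h3] at this
    simpa using this
  · simpa using h6top

/-- decay of intermediate derivatives of the potential at infinity. -/
theorem potential_intermediate_derivatives_decay
    (V : ℝ → ℝ) (a b : ℝ)
    (hC6 : ContDiffOn ℝ 6 V {0}ᶜ)
    (hlim0 : ∀ k : ℕ, 3 ≤ k → k ≤ 6 →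
      (∃ L : ℝ, Tendsto (iteratedDeriv k V) (𝓝[>] 0) (𝓝 L)) ∧
      (∃ L : ℝ, Tendsto (iteratedDeriv k V) (𝓝[<] 0) (𝓝 L)))
    (hatop : Tendsto (iteratedDeriv 2 V) atTop (𝓝 a))
    (habot : Tendsto (iteratedDeriv 2 V) atBot (𝓝 b))
    (h6top : Tendsto (fun x => x ^ 4 * iteratedDeriv 6 V x) atTop (𝓝 0))
    (h6bot : Tendsto (fun x => x ^ 4 * iteratedDeriv 6 V x) atBot (𝓝 0)) :
    ∀ k : ℕ, 3 ≤ k → k ≤ 6 →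
      Tendsto (fun x => x ^ (k - 2) * iteratedDeriv k V x) atTop (𝓝 0) ∧
      Tendsto (fun x => x ^ (k - 2) * iteratedDeriv k V x) atBot (𝓝 0) := by
  have hW2 : ∀ (k : ℕ) (x : ℝ), iteratedDeriv k (fun x => V (-x)) x
      = (-1 : ℝ) ^ k * iteratedDeriv k V (-x) := by
    intro k x
    simpa [smul_eq_mul] using iteratedDeriv_comp_neg k V x
  have hC6W : ContDiffOn ℝ 6 (fun x => V (-x)) {0}ᶜ := by
    refine hC6.comp (contDiff_neg.contDiffOn) fun x hx => ?_
    exact Set.mem_compl_singleton_iff.mpr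
      (neg_ne_zero.mpr (Set.mem_compl_singleton_iff.mp hx))
  have hatopW : Tendsto (iteratedDeriv 2 (fun x => V (-x))) atTop (𝓝 b) := by
    have h : Tendsto (fun x : ℝ => iteratedDeriv 2 V (-x)) atTop (𝓝 b) :=
      habot.comp tendsto_neg_atTop_atBot
    exact h.congr fun x => by rw [hW2 2 x]; ring
  have h6W : Tendsto (fun x => x ^ 4 * iteratedDeriv 6 (fun x => V (-x)) x) atTop (𝓝 0) := by
    have h : Tendsto (fun x : ℝ => (-x) ^ 4 * iteratedDeriv 6 V (-x)) atTop (𝓝 0) :=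
      h6bot.comp tendsto_neg_atTop_atBot
    exact h.congr fun x => by rw [hW2 6 x]; ring
  intro k hk3 hk6
  refine ⟨main_top V a hC6 hatop h6top k hk3 hk6, ?_⟩
  have hW := main_top (fun x => V (-x)) b hC6W hatopW h6W k hk3 hk6
  have h := hW.comp tendsto_neg_atBot_atTop
  refine h.congr fun y => ?_
  show (-y) ^ (k - 2) * iteratedDeriv k (fun x => V (-x)) (-y) = _
  rw [hW2 k (-y), neg_neg, neg_pow]
  have h2 : ((-1 : ℝ)) ^ (k - 2) * (-1 : ℝ) ^ k = 1 := by
    rw [← pow_add]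
    exact Even.neg_one_pow ⟨k - 1, by omega⟩
  linear_combination (y ^ (k - 2) * iteratedDeriv k V y) * h2
end

section
/- Define W(x) = V(x)/V'(x) for x ≠ 0 and W(0) = 0. Under the stated hypotheses on V, the function W is continuously differentiable on ℝ with W'(0) = 1/2. -/
open Filter Topology

/-- W(x) = V(x)/V'(x) (with W(0)=0) is C¹ with W'(0) = 1/2. -/
theorem W_is_C1
    (V : ℝ → ℝ) (Lp Lm Mp Mm : ℝ)
    (hC3 : ContDiffOn ℝ 3 V {0}ᶜ) (hC1 : ContDiff ℝ 1 V)
    (hV0 : V 0 = 0) (hV'0 : deriv V 0 = 0)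
    (hV'' : ∀ x ≠ 0, 0 < deriv (deriv V) x)
    (hLp : 0 < Lp) (hLm : 0 < Lm)
    (h0p : Tendsto (deriv (deriv V)) (𝓝[>] 0) (𝓝 Lp))
    (h0m : Tendsto (deriv (deriv V)) (𝓝[<] 0) (𝓝 Lm))
    (h3p : Tendsto (iteratedDeriv 3 V) (𝓝[>] 0) (𝓝 Mp))
    (h3m : Tendsto (iteratedDeriv 3 V) (𝓝[<] 0) (𝓝 Mm))
    (W : ℝ → ℝ)
    (hW : ∀ x ≠ 0, W x = V x / deriv V x) (hW0 : W 0 = 0) :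
    ContDiff ℝ 1 W ∧ deriv W 0 = 1 / 2 := by
  have hopen : IsOpen ({0}ᶜ : Set ℝ) := isOpen_compl_singleton
  have hV'cont : Continuous (deriv V) := hC1.continuous_deriv le_rfl
  have hVdiff : Differentiable ℝ V := hC1.differentiable one_ne_zero
  have hC2' : ContDiffOn ℝ 2 (deriv V) {0}ᶜ :=
    hC3.deriv_of_isOpen hopen (by norm_num)
  have hC1'' : ContDiffOn ℝ 1 (deriv (deriv V)) {0}ᶜ :=
    hC2'.deriv_of_isOpen hopen (by norm_num)
  have hV''cont : ContinuousOn (deriv (deriv V)) {0}ᶜ := hC1''.continuousOn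
  have hV'HasDeriv : ∀ x : ℝ, x ≠ 0 → HasDerivAt (deriv V) (deriv (deriv V) x) x := by
    intro x hx
    have hmem : x ∈ ({0}ᶜ : Set ℝ) := by simpa using hx
    exact ((hC2'.differentiableOn (by norm_num)).differentiableAt
      (hopen.mem_nhds hmem)).hasDerivAt
  -- sign of V'
  have hmonoR : StrictMonoOn (deriv V) (Set.Ici 0) := by
    apply strictMonoOn_of_deriv_pos (convex_Ici 0) hV'cont.continuousOn
    intro x hx
    rw [interior_Ici] at hx
    exact hV'' x (ne_of_gt hx)
  have hmonoL : StrictMonoOn (deriv V) (Set.Iic 0) := by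
    apply strictMonoOn_of_deriv_pos (convex_Iic 0) hV'cont.continuousOn
    intro x hx
    rw [interior_Iic] at hx
    exact hV'' x (ne_of_lt hx)
  have hpos : ∀ x : ℝ, 0 < x → 0 < deriv V x := by
    intro x hx
    have := hmonoR Set.self_mem_Ici (Set.mem_Ici.2 hx.le) hx
    rwa [hV'0] at this
  have hneg : ∀ x : ℝ, x < 0 → deriv V x < 0 := by
    intro x hx
    have := hmonoL (Set.mem_Iic.2 hx.le) Set.self_mem_Iic hx
    rwa [hV'0] at this
  have hV'ne : ∀ x : ℝ, x ≠ 0 → deriv V x ≠ 0 := by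
    intro x hx
    rcases hx.lt_or_gt with h | h
    · exact (hneg x h).ne
    · exact (hpos x h).ne'
  -- limits to 0
  have hVt : Tendsto V (𝓝 0) (𝓝 0) := by
    have := hC1.continuous.tendsto 0; rwa [hV0] at this
  have hV't : Tendsto (deriv V) (𝓝 0) (𝓝 0) := by
    have := hV'cont.tendsto 0; rwa [hV'0] at this
  -- RIGHT side
  have A1p : Tendsto (fun x => deriv V x / x) (𝓝[>] 0) (𝓝 Lp) := by
    apply HasDerivAt.lhopital_zero_nhdsGT
      (f' := fun x => deriv (deriv V) x) (g' := fun _ => (1:ℝ))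
    · exact eventually_mem_nhdsWithin.mono fun x hx => hV'HasDeriv x (ne_of_gt hx)
    · exact Eventually.of_forall fun x => hasDerivAt_id x
    · exact Eventually.of_forall fun _ => one_ne_zero
    · exact hV't.mono_left nhdsWithin_le_nhds
    · exact tendsto_id.mono_left nhdsWithin_le_nhds
    · simpa using h0p
  have A2p : Tendsto (fun x => V x / x ^ 2) (𝓝[>] 0) (𝓝 (Lp / 2)) := by
    apply HasDerivAt.lhopital_zero_nhdsGT
      (f' := fun x => deriv V x) (g' := fun x => 2 * x)
    · exact Eventually.of_forall fun x => (hVdiff x).hasDerivAt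
    · exact Eventually.of_forall fun x => by
        simpa using hasDerivAt_pow 2 x
    · exact eventually_mem_nhdsWithin.mono fun x hx => (mul_pos two_pos hx).ne'
    · exact hVt.mono_left nhdsWithin_le_nhds
    · have : Tendsto (fun x : ℝ => x ^ 2) (𝓝 0) (𝓝 (0 ^ 2)) :=
        (continuous_pow 2).tendsto 0
      simpa using this.mono_left nhdsWithin_le_nhds
    · apply (A1p.div_const 2).congr
      intro x
      rw [div_div, mul_comm]
  have A3p : Tendsto (fun x => V x / (x * deriv V x)) (𝓝[>] 0) (𝓝 (1 / 2)) := by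
    have h := A2p.mul (A1p.inv₀ hLp.ne')
    have heq : Lp / 2 * (Lp)⁻¹ = 1 / 2 := by field_simp
    rw [heq] at h
    apply h.congr'
    filter_upwards [eventually_mem_nhdsWithin] with x hx
    have hx0 : x ≠ 0 := ne_of_gt hx
    have hd : deriv V x ≠ 0 := hV'ne x hx0
    field_simp
  have A4p : Tendsto (fun x => V x * deriv (deriv V) x / (deriv V x) ^ 2)
      (𝓝[>] 0) (𝓝 (1 / 2)) := by
    have h := (A2p.mul h0p).mul ((A1p.inv₀ hLp.ne').pow 2)
    have heq : Lp / 2 * Lp * Lp⁻¹ ^ 2 = 1 / 2 := by field_simp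
    rw [heq] at h
    apply h.congr'
    filter_upwards [eventually_mem_nhdsWithin] with x hx
    have hx0 : x ≠ 0 := ne_of_gt hx
    have hd : deriv V x ≠ 0 := hV'ne x hx0
    field_simp
  -- LEFT side
  have A1m : Tendsto (fun x => deriv V x / x) (𝓝[<] 0) (𝓝 Lm) := by
    apply HasDerivAt.lhopital_zero_nhdsLT
      (f' := fun x => deriv (deriv V) x) (g' := fun _ => (1:ℝ))
    · exact eventually_mem_nhdsWithin.mono fun x hx => hV'HasDeriv x (ne_of_lt hx)
    · exact Eventually.of_forall fun x => hasDerivAt_id x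
    · exact Eventually.of_forall fun _ => one_ne_zero
    · exact hV't.mono_left nhdsWithin_le_nhds
    · exact tendsto_id.mono_left nhdsWithin_le_nhds
    · simpa using h0m
  have A2m : Tendsto (fun x => V x / x ^ 2) (𝓝[<] 0) (𝓝 (Lm / 2)) := by
    apply HasDerivAt.lhopital_zero_nhdsLT
      (f' := fun x => deriv V x) (g' := fun x => 2 * x)
    · exact Eventually.of_forall fun x => (hVdiff x).hasDerivAt
    · exact Eventually.of_forall fun x => by
        simpa using hasDerivAt_pow 2 x
    · exact eventually_mem_nhdsWithin.mono fun x hx => by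
        have : x ≠ 0 := ne_of_lt hx
        simpa using this
    · exact hVt.mono_left nhdsWithin_le_nhds
    · have : Tendsto (fun x : ℝ => x ^ 2) (𝓝 0) (𝓝 (0 ^ 2)) :=
        (continuous_pow 2).tendsto 0
      simpa using this.mono_left nhdsWithin_le_nhds
    · apply (A1m.div_const 2).congr
      intro x
      rw [div_div, mul_comm]
  have A3m : Tendsto (fun x => V x / (x * deriv V x)) (𝓝[<] 0) (𝓝 (1 / 2)) := by
    have h := A2m.mul (A1m.inv₀ hLm.ne')
    have heq : Lm / 2 * (Lm)⁻¹ = 1 / 2 := by field_simp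
    rw [heq] at h
    apply h.congr'
    filter_upwards [eventually_mem_nhdsWithin] with x hx
    have hx0 : x ≠ 0 := ne_of_lt hx
    have hd : deriv V x ≠ 0 := hV'ne x hx0
    field_simp
  have A4m : Tendsto (fun x => V x * deriv (deriv V) x / (deriv V x) ^ 2)
      (𝓝[<] 0) (𝓝 (1 / 2)) := by
    have h := (A2m.mul h0m).mul ((A1m.inv₀ hLm.ne').pow 2)
    have heq : Lm / 2 * Lm * Lm⁻¹ ^ 2 = 1 / 2 := by field_simp
    rw [heq] at h
    apply h.congr'
    filter_upwards [eventually_mem_nhdsWithin] with x hx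
    have hx0 : x ≠ 0 := ne_of_lt hx
    have hd : deriv V x ≠ 0 := hV'ne x hx0
    field_simp
  -- punctured limits
  have A3 : Tendsto (fun x => V x / (x * deriv V x)) (𝓝[≠] (0:ℝ)) (𝓝 (1 / 2)) := by
    rw [← nhdsLT_sup_nhdsGT]
    exact tendsto_sup.mpr ⟨A3m, A3p⟩
  have A4 : Tendsto (fun x => V x * deriv (deriv V) x / (deriv V x) ^ 2)
      (𝓝[≠] (0:ℝ)) (𝓝 (1 / 2)) := by
    rw [← nhdsLT_sup_nhdsGT]
    exact tendsto_sup.mpr ⟨A4m, A4p⟩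
  -- derivative at 0
  have hW0' : HasDerivAt W (1 / 2) 0 := by
    rw [hasDerivAt_iff_tendsto_slope]
    apply A3.congr'
    filter_upwards [self_mem_nhdsWithin] with x hx
    have hx0 : x ≠ 0 := by simpa using hx
    rw [slope_def_field, hW x hx0, hW0, sub_zero, sub_zero, div_div, mul_comm]
  -- derivative off 0
  have hWd' : ∀ x : ℝ, x ≠ 0 → HasDerivAt W
      ((deriv V x * deriv V x - V x * deriv (deriv V) x) / (deriv V x) ^ 2) x := by
    intro x hx
    have hmem : x ∈ ({0}ᶜ : Set ℝ) := by simpa using hx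
    have h1 : HasDerivAt V (deriv V x) x := (hVdiff x).hasDerivAt
    have h2 := hV'HasDeriv x hx
    have h := h1.div h2 (hV'ne x hx)
    apply h.congr_of_eventuallyEq
    filter_upwards [hopen.mem_nhds hmem] with y hy
    exact hW y (by simpa using hy)
  have hWdiff : Differentiable ℝ W := by
    intro x
    rcases eq_or_ne x 0 with rfl | hx
    · exact hW0'.differentiableAt
    · exact (hWd' x hx).differentiableAt
  have hderiv0 : deriv W 0 = 1 / 2 := hW0'.deriv
  -- continuity of deriv W
  set g : ℝ → ℝ := fun x =>
    (deriv V x * deriv V x - V x * deriv (deriv V) x) / (deriv V x) ^ 2 with hg_def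
  have hderiv_eq : ∀ x : ℝ, x ≠ 0 → deriv W x = g x := fun x hx => (hWd' x hx).deriv
  have hcont : Continuous (deriv W) := by
    rw [continuous_iff_continuousAt]
    intro x
    rcases eq_or_ne x 0 with rfl | hx
    · -- at 0
      unfold ContinuousAt
      rw [hderiv0, ← nhdsNE_sup_pure]
      apply tendsto_sup.mpr
      constructor
      · have h : Tendsto (fun x => 1 - V x * deriv (deriv V) x / (deriv V x) ^ 2)
            (𝓝[≠] (0:ℝ)) (𝓝 (1 / 2)) := by
          have := tendsto_const_nhds (x := (1:ℝ)) (f := 𝓝[≠] (0:ℝ)) |>.sub A4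
          norm_num at this ⊢
          exact this
        apply h.congr'
        filter_upwards [self_mem_nhdsWithin] with y hy
        have hy0 : y ≠ 0 := by simpa using hy
        have hd : deriv V y ≠ 0 := hV'ne y hy0
        rw [hderiv_eq y hy0, hg_def]
        field_simp
      · rw [← hderiv0]
        exact tendsto_pure_nhds (deriv W) 0
    · -- away from 0
      have hmem : x ∈ ({0}ᶜ : Set ℝ) := by simpa using hx
      have hgc : ContinuousAt g x := by
        apply ContinuousAt.div
        · exact (hV'cont.continuousAt.mul hV'cont.continuousAt).sub
            (hC1.continuous.continuousAt.mul
              (hV''cont.continuousAt (hopen.mem_nhds hmem)))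
        · exact hV'cont.continuousAt.pow 2
        · exact pow_ne_zero 2 (hV'ne x hx)
      apply hgc.congr
      filter_upwards [hopen.mem_nhds hmem] with y hy
      exact (hderiv_eq y (by simpa using hy)).symm
  exact ⟨contDiff_one_iff_deriv.mpr ⟨hWdiff, hcont⟩, hderiv0⟩
end

section
/- If g : ℝ → ℝ is C⁶, the limits g(±∞) = lim_{x→±∞} g(x) are finite, and x⁶ g^{(6)}(x) → 0 as |x| → ∞, then for every k with 1 ≤ k ≤ 6 one has x^k g^{(k)}(x) → 0 as |x| → ∞. -/
open Filter Topology

section PerturbationAux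

open Set

private lemma pdd_iterEq {g : ℝ → ℝ} (hC6 : ContDiff ℝ 6 g) {a b : ℝ} (hab : a < b)
    {j : ℕ} (hj : j ≤ 6) {x : ℝ} (hx : x ∈ Icc a b) :
    iteratedDerivWithin j g (Icc a b) x = iteratedDeriv j g x := by
  have h := (contDiff_iff_ftaylorSeries.mp hC6).hasFTaylorSeriesUpToOn (Icc a b)
  have h2 := h.eq_iteratedFDerivWithin_of_uniqueDiffOn (m := j) (by exact_mod_cast hj)
    (uniqueDiffOn_Icc hab) hx
  rw [iteratedDerivWithin_eq_iteratedFDerivWithin, iteratedDeriv_eq_iteratedFDeriv, ← h2]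
  rfl

private lemma pdd_tendstoE (g : ℝ → ℝ) (gp : ℝ) (hC6 : ContDiff ℝ 6 g)
    (hgp : Tendsto g atTop (𝓝 gp))
    (h6 : Tendsto (fun x => x ^ 6 * iteratedDeriv 6 g x) atTop (𝓝 0))
    (c : ℝ) (hc : 0 < c) :
    Tendsto (fun x => c * (x * iteratedDeriv 1 g x)
      + c ^ 2 / 2 * (x ^ 2 * iteratedDeriv 2 g x)
      + c ^ 3 / 6 * (x ^ 3 * iteratedDeriv 3 g x)
      + c ^ 4 / 24 * (x ^ 4 * iteratedDeriv 4 g x)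
      + c ^ 5 / 120 * (x ^ 5 * iteratedDeriv 5 g x)) atTop (𝓝 0) := by
  rw [Metric.tendsto_nhds]
  intro ε hε
  have hmul : Tendsto (fun x : ℝ => (1 + c) * x) atTop atTop :=
    Tendsto.const_mul_atTop (by linarith) tendsto_id
  have hdiff : Tendsto (fun x => g ((1 + c) * x) - g x) atTop (𝓝 0) := by
    simpa using (hgp.comp hmul).sub hgp
  have hd2 : ∀ᶠ x in atTop, |g ((1 + c) * x) - g x| < ε / 2 := by
    have := (Metric.tendsto_nhds.mp hdiff) (ε / 2) (by linarith)
    simpa only [Real.dist_eq, sub_zero] using this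
  set δ : ℝ := 360 * ε / c ^ 6 with hδ
  have hδpos : 0 < δ := by positivity
  have h6' : ∀ᶠ y in atTop, |y ^ 6 * iteratedDeriv 6 g y| < δ := by
    have := (Metric.tendsto_nhds.mp h6) δ hδpos
    simpa only [Real.dist_eq, sub_zero] using this
  obtain ⟨X, hX⟩ := eventually_atTop.mp h6'
  filter_upwards [hd2, eventually_ge_atTop (max X 1)] with x hx1 hx2
  have hxX : X ≤ x := le_trans (le_max_left _ _) hx2
  have hx1' : (1 : ℝ) ≤ x := le_trans (le_max_right _ _) hx2
  have hx0 : 0 < x := by linarith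
  have hxy : x < (1 + c) * x := by nlinarith
  have hdiffOn : DifferentiableOn ℝ
      (iteratedDerivWithin 5 g (Icc x ((1 + c) * x))) (Ioo x ((1 + c) * x)) := by
    refine (((hC6.differentiable_iteratedDeriv 5
      (by exact_mod_cast Nat.lt_succ_self 5)).differentiableOn).congr ?_)
    exact fun y hy => pdd_iterEq hC6 hxy (by norm_num) (Ioo_subset_Icc_self hy)
  obtain ⟨ξ, hξ, heq⟩ := by
    have := taylor_mean_remainder_lagrange (f := g) (n := 5) hxy.ne
      (hC6.contDiffOn.of_le (by norm_num)) (by rw [uIcc_of_lt hxy, uIoo_of_lt hxy]; exact hdiffOn)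
    rwa [uIcc_of_lt hxy, uIoo_of_lt hxy] at this
  rw [taylor_within_apply] at heq
  have hξ6 : iteratedDerivWithin 6 g (Icc x ((1 + c) * x)) ξ = iteratedDeriv 6 g ξ :=
    pdd_iterEq hC6 hxy (le_refl 6) (Ioo_subset_Icc_self hξ)
  have hsum : ∑ k ∈ Finset.range (5 + 1),
      ((k.factorial : ℝ)⁻¹ * ((1 + c) * x - x) ^ k) • iteratedDerivWithin k g (Icc x ((1 + c) * x)) x
      = g x + (c * (x * iteratedDeriv 1 g x)
      + c ^ 2 / 2 * (x ^ 2 * iteratedDeriv 2 g x)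
      + c ^ 3 / 6 * (x ^ 3 * iteratedDeriv 3 g x)
      + c ^ 4 / 24 * (x ^ 4 * iteratedDeriv 4 g x)
      + c ^ 5 / 120 * (x ^ 5 * iteratedDeriv 5 g x)) := by
    have hmem : x ∈ Icc x ((1 + c) * x) := ⟨le_refl x, le_of_lt hxy⟩
    rw [Finset.sum_range_succ, Finset.sum_range_succ, Finset.sum_range_succ,
      Finset.sum_range_succ, Finset.sum_range_succ, Finset.sum_range_one]
    rw [pdd_iterEq hC6 hxy (by norm_num : (0:ℕ) ≤ 6) hmem,
      pdd_iterEq hC6 hxy (by norm_num : (1:ℕ) ≤ 6) hmem,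
      pdd_iterEq hC6 hxy (by norm_num : (2:ℕ) ≤ 6) hmem,
      pdd_iterEq hC6 hxy (by norm_num : (3:ℕ) ≤ 6) hmem,
      pdd_iterEq hC6 hxy (by norm_num : (4:ℕ) ≤ 6) hmem,
      pdd_iterEq hC6 hxy (by norm_num : (5:ℕ) ≤ 6) hmem,
      iteratedDeriv_zero]
    simp only [smul_eq_mul]
    norm_num [Nat.factorial]
    ring
  rw [hsum, hξ6] at heq
  have hξx : x < ξ := hξ.1
  have hξ0 : 0 < ξ := lt_trans hx0 hξx
  have hbound := hX ξ (by linarith)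
  have hpow : x ^ 6 ≤ ξ ^ 6 := pow_le_pow_left₀ (le_of_lt hx0) (le_of_lt hξx) 6
  have hrem : |iteratedDeriv 6 g ξ * ((1 + c) * x - x) ^ (5 + 1) / ((5 + 1).factorial : ℝ)| ≤ ε / 2 := by
    have h1 : ((1 + c) * x - x) ^ 6 = c ^ 6 * x ^ 6 := by ring
    have h2 : |iteratedDeriv 6 g ξ| * ξ ^ 6 < δ := by
      have := hbound
      rwa [abs_mul, abs_of_pos (by positivity : (0:ℝ) < ξ ^ 6), mul_comm] at this
    rw [abs_div, abs_mul, h1, abs_of_pos (by positivity : (0:ℝ) < c ^ 6 * x ^ 6)]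
    have h3 : |iteratedDeriv 6 g ξ| * (c ^ 6 * x ^ 6) ≤ δ * c ^ 6 := by
      have hm : |iteratedDeriv 6 g ξ| * x ^ 6 ≤ |iteratedDeriv 6 g ξ| * ξ ^ 6 :=
        mul_le_mul_of_nonneg_left hpow (abs_nonneg _)
      nlinarith [pow_pos hc 6]
    have h4 : δ * c ^ 6 = 360 * ε := by
      rw [hδ]; field_simp
    have h5 : |(((5 + 1).factorial : ℕ) : ℝ)| = 720 := by norm_num [Nat.factorial]
    rw [h5]
    rw [div_le_iff₀ (by norm_num : (0:ℝ) < 720)]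
    nlinarith
  have habs : |c * (x * iteratedDeriv 1 g x)
      + c ^ 2 / 2 * (x ^ 2 * iteratedDeriv 2 g x)
      + c ^ 3 / 6 * (x ^ 3 * iteratedDeriv 3 g x)
      + c ^ 4 / 24 * (x ^ 4 * iteratedDeriv 4 g x)
      + c ^ 5 / 120 * (x ^ 5 * iteratedDeriv 5 g x)| < ε := by
    set E := c * (x * iteratedDeriv 1 g x)
      + c ^ 2 / 2 * (x ^ 2 * iteratedDeriv 2 g x)
      + c ^ 3 / 6 * (x ^ 3 * iteratedDeriv 3 g x)
      + c ^ 4 / 24 * (x ^ 4 * iteratedDeriv 4 g x)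
      + c ^ 5 / 120 * (x ^ 5 * iteratedDeriv 5 g x) with hE
    have : E = (g ((1 + c) * x) - g x) -
        iteratedDeriv 6 g ξ * ((1 + c) * x - x) ^ (5 + 1) / ((5 + 1).factorial : ℝ) := by
      linarith [heq]
    rw [this]
    calc |(g ((1 + c) * x) - g x) -
          iteratedDeriv 6 g ξ * ((1 + c) * x - x) ^ (5 + 1) / ((5 + 1).factorial : ℝ)|
        ≤ |g ((1 + c) * x) - g x| +
          |iteratedDeriv 6 g ξ * ((1 + c) * x - x) ^ (5 + 1) / ((5 + 1).factorial : ℝ)| :=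
          abs_sub _ _
      _ < ε / 2 + ε / 2 := by
          apply add_lt_add_of_lt_of_le hx1 hrem
      _ = ε := by ring
  simpa only [Real.dist_eq, sub_zero] using habs

private lemma pdd_comb5 {f1 f2 f3 f4 f5 : ℝ → ℝ} {l : Filter ℝ}
    (h1 : Tendsto f1 l (𝓝 0)) (h2 : Tendsto f2 l (𝓝 0))
    (h3 : Tendsto f3 l (𝓝 0)) (h4 : Tendsto f4 l (𝓝 0)) (h5 : Tendsto f5 l (𝓝 0))
    (c1 c2 c3 c4 c5 : ℝ) :
    Tendsto (fun x => c1 * f1 x + c2 * f2 x + c3 * f3 x + c4 * f4 x + c5 * f5 x) l (𝓝 0) := by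
  have := ((((h1.const_mul c1).add (h2.const_mul c2)).add (h3.const_mul c3)).add
    (h4.const_mul c4)).add (h5.const_mul c5)
  simpa using this

private lemma pdd_keyTop (g : ℝ → ℝ) (gp : ℝ) (hC6 : ContDiff ℝ 6 g)
    (hgp : Tendsto g atTop (𝓝 gp))
    (h6 : Tendsto (fun x => x ^ 6 * iteratedDeriv 6 g x) atTop (𝓝 0))
    (k : ℕ) (hk1 : 1 ≤ k) (hk6 : k ≤ 6) :
    Tendsto (fun x => x ^ k * iteratedDeriv k g x) atTop (𝓝 0) := by
  have E1 := pdd_tendstoE g gp hC6 hgp h6 1 (by norm_num)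
  have E2 := pdd_tendstoE g gp hC6 hgp h6 2 (by norm_num)
  have E3 := pdd_tendstoE g gp hC6 hgp h6 3 (by norm_num)
  have E4 := pdd_tendstoE g gp hC6 hgp h6 4 (by norm_num)
  have E5 := pdd_tendstoE g gp hC6 hgp h6 5 (by norm_num)
  interval_cases k
  · exact (pdd_comb5 E1 E2 E3 E4 E5 5 (-5) (10/3) (-5/4) (1/5)).congr (fun x => by ring_nf)
  · exact (pdd_comb5 E1 E2 E3 E4 E5 (-77/6) (107/6) (-13) (61/12) (-5/6)).congr
      (fun x => by ring_nf)
  · exact (pdd_comb5 E1 E2 E3 E4 E5 (71/4) (-59/2) (49/2) (-41/4) (7/4)).congr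
      (fun x => by ring_nf)
  · exact (pdd_comb5 E1 E2 E3 E4 E5 (-14) 26 (-24) 11 (-2)).congr (fun x => by ring_nf)
  · exact (pdd_comb5 E1 E2 E3 E4 E5 5 (-10) 10 (-5) 1).congr (fun x => by ring_nf)
  · exact h6

end PerturbationAux

/-- decay of all derivatives of a bounded perturbation g. -/
theorem perturbation_derivatives_decay
    (g : ℝ → ℝ) (gp gm : ℝ)
    (hC6 : ContDiff ℝ 6 g)
    (hgp : Tendsto g atTop (𝓝 gp))
    (hgm : Tendsto g atBot (𝓝 gm))
    (h6top : Tendsto (fun x => x ^ 6 * iteratedDeriv 6 g x) atTop (𝓝 0))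
    (h6bot : Tendsto (fun x => x ^ 6 * iteratedDeriv 6 g x) atBot (𝓝 0)) :
    ∀ k : ℕ, 1 ≤ k → k ≤ 6 →
      Tendsto (fun x => x ^ k * iteratedDeriv k g x) atTop (𝓝 0) ∧
      Tendsto (fun x => x ^ k * iteratedDeriv k g x) atBot (𝓝 0) := by
  intro k hk1 hk6
  refine ⟨pdd_keyTop g gp hC6 hgp h6top k hk1 hk6, ?_⟩
  have hC6' : ContDiff ℝ 6 (fun x => g (-x)) := hC6.comp contDiff_neg
  have hgm' : Tendsto (fun x => g (-x)) atTop (𝓝 gm) := hgm.comp tendsto_neg_atTop_atBot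
  have hiter : ∀ (n : ℕ) (x : ℝ),
      iteratedDeriv n (fun x => g (-x)) x = (-1 : ℝ) ^ n * iteratedDeriv n g (-x) := by
    intro n x
    rw [iteratedDeriv_comp_neg]
    simp [smul_eq_mul]
  have h6' : Tendsto (fun x => x ^ 6 * iteratedDeriv 6 (fun x => g (-x)) x) atTop (𝓝 0) := by
    have hc := h6bot.comp tendsto_neg_atTop_atBot
    apply hc.congr
    intro x
    simp only [Function.comp_apply, hiter]
    ring
  have hk := pdd_keyTop (fun x => g (-x)) gm hC6' hgm' h6' k hk1 hk6
  have hk2 : Tendsto (fun x : ℝ => (-x) ^ k * iteratedDeriv k g (-x)) atTop (𝓝 0) := by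
    apply hk.congr
    intro x
    rw [hiter]
    ring
  have := hk2.comp tendsto_neg_atBot_atTop
  apply this.congr
  intro x
  simp [Function.comp]
end

section
/- Let C : ℝ → ℝ be the solution of x'' + a x⁺ - b x⁻ = 0 with C(0) = 1, C'(0) = 0. Then on [-π/(2√a), π/(2√a)], C(θ) = cos(√a θ), and on (π/(2√a), π/(2√a) + π/√b), C(θ) = -√(a/b) · sin(√b (θ - π/(2√a))). -/
open Real
open scoped NNReal

/-- The vector field of the asymmetric oscillator as a first-order system. -/
private def acVF (a b : ℝ) : ℝ → ℝ × ℝ → ℝ × ℝ :=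
  fun _ p => (p.2, -(a * max p.1 0 - b * max (-p.1) 0))

private lemma acVF_lipschitz (a b : ℝ) (ha : 0 < a) (hb : 0 < b) :
    ∀ t, LipschitzWith (1 + a.toNNReal + b.toNNReal) (acVF a b t) := by
  intro t
  apply LipschitzWith.of_dist_le_mul
  intro p q
  rw [Prod.dist_eq, Prod.dist_eq]
  have hd1 : dist (acVF a b t p).1 (acVF a b t q).1 = dist p.2 q.2 := rfl
  have key : dist (acVF a b t p).2 (acVF a b t q).2 ≤ (a + b) * dist p.1 q.1 := by
    simp only [acVF, Real.dist_eq]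
    have h1 : |max p.1 0 - max q.1 0| ≤ |p.1 - q.1| := abs_max_sub_max_le_abs _ _ _
    have h2' : |max (-p.1) 0 - max (-q.1) 0| ≤ |p.1 - q.1| := by
      calc |max (-p.1) 0 - max (-q.1) 0| ≤ |(-p.1) - (-q.1)| := abs_max_sub_max_le_abs _ _ _
        _ = |p.1 - q.1| := by rw [← abs_neg]; congr 1; ring
    calc |(-(a * max p.1 0 - b * max (-p.1) 0)) - (-(a * max q.1 0 - b * max (-q.1) 0))|
        = |a * (max p.1 0 - max q.1 0) - b * (max (-p.1) 0 - max (-q.1) 0)| := by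
          rw [show (-(a * max p.1 0 - b * max (-p.1) 0)) - (-(a * max q.1 0 - b * max (-q.1) 0))
            = -(a * (max p.1 0 - max q.1 0) - b * (max (-p.1) 0 - max (-q.1) 0)) by ring,
            abs_neg]
      _ ≤ |a * (max p.1 0 - max q.1 0)| + |b * (max (-p.1) 0 - max (-q.1) 0)| := abs_sub _ _
      _ = a * |max p.1 0 - max q.1 0| + b * |max (-p.1) 0 - max (-q.1) 0| := by
          rw [abs_mul, abs_mul, abs_of_pos ha, abs_of_pos hb]
      _ ≤ a * |p.1 - q.1| + b * |p.1 - q.1| := by gcongr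
      _ = (a + b) * |p.1 - q.1| := by ring
  have hK : ((1 + a.toNNReal + b.toNNReal : ℝ≥0) : ℝ) = 1 + a + b := by
    push_cast [Real.coe_toNNReal a ha.le, Real.coe_toNNReal b hb.le]; ring
  rw [hK]
  have hpq1 : dist p.1 q.1 ≤ max (dist p.1 q.1) (dist p.2 q.2) := le_max_left _ _
  have hpq2 : dist p.2 q.2 ≤ max (dist p.1 q.1) (dist p.2 q.2) := le_max_right _ _
  have hdnn : (0:ℝ) ≤ max (dist p.1 q.1) (dist p.2 q.2) := le_trans dist_nonneg hpq1
  apply max_le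
  · rw [hd1]; nlinarith
  · calc dist (acVF a b t p).2 (acVF a b t q).2 ≤ (a + b) * dist p.1 q.1 := key
      _ ≤ (1 + a + b) * max (dist p.1 q.1) (dist p.2 q.2) := by nlinarith

/-- explicit form of the asymmetric cosine C. -/
theorem asymmetric_cosine_formula
    (a b : ℝ) (ha : 0 < a) (hb : 0 < b)
    (C C' : ℝ → ℝ)
    (hC : ∀ θ, HasDerivAt C (C' θ) θ)
    (hC' : ∀ θ, HasDerivAt C'
      (-(a * max (C θ) 0 - b * max (-(C θ)) 0)) θ)
    (hC0 : C 0 = 1) (hC'0 : C' 0 = 0) :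
    (∀ θ ∈ Set.Icc (-(π / (2 * Real.sqrt a))) (π / (2 * Real.sqrt a)),
      C θ = Real.cos (Real.sqrt a * θ)) ∧
    (∀ θ ∈ Set.Ioo (π / (2 * Real.sqrt a))
        (π / (2 * Real.sqrt a) + π / Real.sqrt b),
      C θ = -Real.sqrt (a / b) *
        Real.sin (Real.sqrt b * (θ - π / (2 * Real.sqrt a)))) := by
  set sa := Real.sqrt a with hsa
  set sb := Real.sqrt b with hsb
  have hsa0 : 0 < sa := Real.sqrt_pos.mpr ha
  have hsb0 : 0 < sb := Real.sqrt_pos.mpr hb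
  have hsa2 : sa * sa = a := Real.mul_self_sqrt ha.le
  have hsb2 : sb * sb = b := Real.mul_self_sqrt hb.le
  set T := π / (2 * sa) with hT
  have hT0 : 0 < T := by positivity
  set c := Real.sqrt (a / b) with hc
  have hc0 : 0 < c := Real.sqrt_pos.mpr (by positivity)
  have hcsab : c = sa / sb := by rw [hc, hsa, hsb, Real.sqrt_div ha.le]
  have hcsb : c * sb = sa := by rw [hcsab]; field_simp
  have hsaT : sa * T = π / 2 := by rw [hT]; field_simp
  -- the two branches and the glued explicit solution
  set A : ℝ → ℝ × ℝ := fun θ => (Real.cos (sa * θ), -sa * Real.sin (sa * θ)) with hA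
  set B : ℝ → ℝ × ℝ :=
    fun θ => (-c * Real.sin (sb * (θ - T)), -(c * sb) * Real.cos (sb * (θ - T))) with hB
  set G : ℝ → ℝ × ℝ := fun θ => if θ ≤ T then A θ else B θ with hG
  set F : ℝ → ℝ × ℝ := fun θ => (C θ, C' θ) with hF
  have hAT : A T = (0, -sa) := by
    simp [hA, hsaT, Real.cos_pi_div_two, Real.sin_pi_div_two]
  have hBT : B T = (0, -sa) := by simp [hB, hcsb]
  have hGB : ∀ x ∈ Set.Ici T, G x = B x := by
    intro x hx
    rcases eq_or_lt_of_le (Set.mem_Ici.mp hx) with h | h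
    · rw [hG]; simp only [← h, if_pos le_rfl]; rw [hAT, hBT]
    · rw [hG]; simp only [if_neg (not_le.mpr h)]
  -- derivatives of the branches
  have hA' : ∀ θ, HasDerivAt A (-sa * Real.sin (sa * θ), -(a * Real.cos (sa * θ))) θ := by
    intro θ
    have hlin : HasDerivAt (fun θ : ℝ => sa * θ) sa θ := by
      simpa using ((hasDerivAt_id θ).const_mul sa)
    have h1 : HasDerivAt (fun θ => Real.cos (sa * θ)) (-sa * Real.sin (sa * θ)) θ := by
      have := hlin.cos
      convert this using 1; ring
    have h2 : HasDerivAt (fun θ => -sa * Real.sin (sa * θ)) (-(a * Real.cos (sa * θ))) θ := by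
      have := hlin.sin.const_mul (-sa)
      refine this.congr_deriv ?_; rw [← hsa2]; ring
    exact h1.prodMk h2
  have hB' : ∀ θ, HasDerivAt B
      (-(c * sb) * Real.cos (sb * (θ - T)), (c * b) * Real.sin (sb * (θ - T))) θ := by
    intro θ
    have hlin : HasDerivAt (fun θ : ℝ => sb * (θ - T)) sb θ := by
      simpa using (((hasDerivAt_id θ).sub_const T).const_mul sb)
    have h1 : HasDerivAt (fun θ => -c * Real.sin (sb * (θ - T)))
        (-(c * sb) * Real.cos (sb * (θ - T))) θ := by
      have := hlin.sin.const_mul (-c)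
      refine this.congr_deriv ?_; ring
    have h2 : HasDerivAt (fun θ => -(c * sb) * Real.cos (sb * (θ - T)))
        ((c * b) * Real.sin (sb * (θ - T))) θ := by
      have := hlin.cos.const_mul (-(c * sb))
      refine this.congr_deriv ?_; rw [← hsb2]; ring
    exact h1.prodMk h2
  -- G is differentiable at the junction T
  have hGT : HasDerivAt G (-sa, 0) T := by
    have hIic : HasDerivWithinAt G (-sa, 0) (Set.Iic T) T := by
      have h := (hA' T).hasDerivWithinAt (s := Set.Iic T)
      have hval : (-sa * Real.sin (sa * T), -(a * Real.cos (sa * T))) = ((-sa : ℝ), (0:ℝ)) := by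
        rw [hsaT]; simp
      rw [hval] at h
      exact h.congr (fun x hx => by rw [hG]; simp only [if_pos (Set.mem_Iic.mp hx)])
        (by rw [hG]; simp only [if_pos le_rfl])
    have hIci : HasDerivWithinAt G (-sa, 0) (Set.Ici T) T := by
      have h := (hB' T).hasDerivWithinAt (s := Set.Ici T)
      have hval : (-(c * sb) * Real.cos (sb * (T - T)), (c * b) * Real.sin (sb * (T - T)))
          = ((-sa : ℝ), (0:ℝ)) := by
        simp [hcsb]
      rw [hval] at h
      exact h.congr hGB (by rw [hGB T (Set.mem_Ici.mpr le_rfl)])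
    have := hIic.union hIci
    rw [Set.Iic_union_Ici] at this
    rw [hasDerivWithinAt_univ] at this
    exact this
  -- F and G are continuous
  have hFc : Continuous F := by
    apply continuous_iff_continuousAt.mpr
    exact fun t => ((hC t).continuousAt).prodMk ((hC' t).continuousAt)
  have hGc : Continuous G := by
    apply continuous_iff_continuousAt.mpr
    intro t
    rcases lt_trichotomy t T with h | h | h
    · have hev : A =ᶠ[nhds t] G := by
        filter_upwards [eventually_lt_nhds h] with x hx
        rw [hG]; simp only [if_pos hx.le]
      exact ((hA' t).continuousAt).congr hev
    · exact (h ▸ hGT).continuousAt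
    · have hev : B =ᶠ[nhds t] G := by
        filter_upwards [eventually_gt_nhds h] with x hx
        rw [hG]; simp only [if_neg (not_le.mpr hx)]
      exact ((hB' t).continuousAt).congr hev
  -- G solves the ODE on the interval of interest
  have hG' : ∀ t ∈ Set.Ioo (-T) (T + π / sb), HasDerivAt G (acVF a b t (G t)) t := by
    intro t ht
    rcases lt_trichotomy t T with h | h | h
    · have hev : ∀ᶠ x in nhds t, A x = G x := by
        filter_upwards [eventually_lt_nhds h] with x hx
        rw [hG]; simp only [if_pos hx.le]
      have hd := (hA' t).congr_of_eventuallyEq (Filter.EventuallyEq.symm hev)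
      refine hd.congr_deriv (Eq.symm ?_)
      have hGt : G t = A t := by rw [hG]; simp only [if_pos h.le]
      have hcosnn : 0 ≤ Real.cos (sa * t) := by
        apply Real.cos_nonneg_of_mem_Icc
        constructor
        · rw [← hsaT]
          have : -T < t := ht.1
          nlinarith
        · rw [← hsaT]; nlinarith [ht.1]
      rw [hGt, hA]
      simp only [acVF]
      rw [max_eq_left hcosnn, max_eq_right (neg_nonpos.mpr hcosnn)]
      simp
    · have hGt : G t = (0, -sa) := by
        rw [hG, h]; simp only [le_refl, if_true]; exact hAT
      have hv : acVF a b t (G t) = (-sa, 0) := by rw [hGt]; simp [acVF]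
      rw [hv, h]; exact hGT
    · have hev : ∀ᶠ x in nhds t, B x = G x := by
        filter_upwards [eventually_gt_nhds h] with x hx
        rw [hG]; simp only [if_neg (not_le.mpr hx)]
      have hd := (hB' t).congr_of_eventuallyEq (Filter.EventuallyEq.symm hev)
      refine hd.congr_deriv (Eq.symm ?_)
      have hGt : G t = B t := hGB t (Set.mem_Ici.mpr h.le)
      have hsinnn : 0 ≤ Real.sin (sb * (t - T)) := by
        apply Real.sin_nonneg_of_nonneg_of_le_pi
        · nlinarith
        · have ht2 : t < T + π / sb := ht.2
          have : sb * (t - T) < sb * (π / sb) := by nlinarith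
          rw [mul_div_cancel₀ _ (ne_of_gt hsb0)] at this
          exact this.le
      rw [hGt, hB]
      simp only [acVF]
      have h1 : max (-c * Real.sin (sb * (t - T))) 0 = 0 :=
        max_eq_right (by nlinarith)
      have h2 : max (-(-c * Real.sin (sb * (t - T)))) 0 = c * Real.sin (sb * (t - T)) := by
        rw [neg_mul, neg_neg]; exact max_eq_left (by nlinarith)
      rw [h1, h2]
      simp only [Prod.mk.injEq]
      exact ⟨by trivial, by ring⟩
  -- F solves the ODE
  have hF' : ∀ t, HasDerivAt F (acVF a b t (F t)) t := fun t => (hC t).prodMk (hC' t)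
  -- uniqueness
  have h0mem : (0:ℝ) ∈ Set.Ioo (-T) (T + π / sb) := by
    constructor <;> [linarith; positivity]
  have heq : F 0 = G 0 := by
    have hg0 : G 0 = A 0 := by rw [hG]; simp only [if_pos hT0.le]
    rw [hg0, hA]
    show (C 0, C' 0) = _
    rw [hC0, hC'0]; simp
  have hEq : Set.EqOn F G (Set.Icc (-T) (T + π / sb)) := by
    apply ODE_solution_unique_of_mem_Icc
      (v := acVF a b) (s := fun _ => Set.univ)
      (K := 1 + a.toNNReal + b.toNNReal)
      (fun t _ => (acVF_lipschitz a b ha hb t).lipschitzOnWith)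
      h0mem hFc.continuousOn (fun t _ => hF' t) (fun _ _ => Set.mem_univ _)
      hGc.continuousOn (fun t ht => hG' t ht) (fun _ _ => Set.mem_univ _) heq
  constructor
  · intro θ hθ
    have hpos : 0 < π / sb := by positivity
    have hmem : θ ∈ Set.Icc (-T) (T + π / sb) := ⟨hθ.1, by linarith [hθ.2]⟩
    have h1 : C θ = (G θ).1 := congrArg Prod.fst (hEq hmem)
    rw [h1, hG]
    simp only [if_pos hθ.2, hA]
  · intro θ hθ
    have hmem : θ ∈ Set.Icc (-T) (T + π / sb) := ⟨by linarith [hθ.1], hθ.2.le⟩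
    have h1 : C θ = (G θ).1 := congrArg Prod.fst (hEq hmem)
    rw [h1, hG]
    simp only [if_neg (not_le.mpr hθ.1), hB]
end

section
/- Suppose Φ : ℝ → ℝ is C¹ with Φ'(x)/x → 0 as |x| → ∞ (and Φ' continuous). For λ > 0 let u_λ solve u'' + a u + λ^{-1} Φ'(λ u) = 0 with u(0) = 1, u'(0) = 0, where a > 0. Then u_λ(θ) → cos(√a θ) uniformly on compact intervals as λ → +∞. -/
open Real Filter Topology Set

section Aux

lemma derivPhi_lin_bound (Φ : ℝ → ℝ) (hΦ : ContDiff ℝ 1 Φ)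
    (hΦtop : Tendsto (fun x => deriv Φ x / x) atTop (𝓝 0))
    (hΦbot : Tendsto (fun x => deriv Φ x / x) atBot (𝓝 0))
    {ε : ℝ} (hε : 0 < ε) :
    ∃ C : ℝ, 0 ≤ C ∧ ∀ x : ℝ, |deriv Φ x| ≤ ε * |x| + C := by
  obtain ⟨R₁, hR₁⟩ := eventually_atTop.mp (hΦtop.eventually (Metric.ball_mem_nhds 0 hε))
  obtain ⟨R₂, hR₂⟩ := eventually_atBot.mp (hΦbot.eventually (Metric.ball_mem_nhds 0 hε))
  set R : ℝ := max |R₁| |R₂| with hR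
  have hRnn : 0 ≤ R := le_trans (abs_nonneg R₁) (le_max_left _ _)
  obtain ⟨C, hC⟩ := (isCompact_Icc (a := -R) (b := R)).exists_bound_of_continuousOn
    ((hΦ.continuous_deriv le_rfl).continuousOn)
  refine ⟨max C 0, le_max_right _ _, fun x => ?_⟩
  rcases le_or_gt |x| R with hx | hx
  · have : |deriv Φ x| ≤ C := by
      have hm := abs_le.mp hx
      simpa using hC x ⟨hm.1, hm.2⟩
    have h2 : (0:ℝ) ≤ ε * |x| := by positivity
    calc |deriv Φ x| ≤ C := this
      _ ≤ ε * |x| + max C 0 := by nlinarith [le_max_left C 0]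
  · have hx0 : x ≠ 0 := by
      intro h; rw [h] at hx; simp at hx
      exact absurd hx (not_lt.mpr hRnn)
    have key : |deriv Φ x| / |x| < ε := by
      rcases le_or_gt 0 x with hpos | hneg
      · have hxx : R < x := by rwa [abs_of_nonneg hpos] at hx
        have : R₁ ≤ x := le_trans (le_abs_self R₁) (le_trans (le_max_left _ _) hxx.le)
        simpa [Real.dist_eq, abs_div] using hR₁ x this
      · have : x ≤ R₂ := by
          have : |R₂| ≤ R := le_max_right _ _
          have hax : R < -x := by rwa [abs_of_neg hneg] at hx
          linarith [neg_abs_le R₂]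
        simpa [Real.dist_eq, abs_div] using hR₂ x this
    have : |deriv Φ x| < ε * |x| := by
      have := (div_lt_iff₀ (abs_pos.mpr hx0)).mp key
      linarith [this]
    nlinarith [le_max_right C 0, this]

lemma Phi_quad_bound (Φ : ℝ → ℝ) (hΦ : ContDiff ℝ 1 Φ)
    (hΦtop : Tendsto (fun x => deriv Φ x / x) atTop (𝓝 0))
    (hΦbot : Tendsto (fun x => deriv Φ x / x) atBot (𝓝 0))
    {ε : ℝ} (hε : 0 < ε) :
    ∃ D : ℝ, 0 ≤ D ∧ ∀ x : ℝ, |Φ x - Φ 0| ≤ ε * x ^ 2 + D := by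
  obtain ⟨C, hC0, hC⟩ := derivPhi_lin_bound Φ hΦ hΦtop hΦbot (half_pos hε)
  refine ⟨C ^ 2 / (2 * ε), by positivity, fun x => ?_⟩
  have hmvt : |Φ x - Φ 0| ≤ (ε / 2 * |x| + C) * |x| := by
    have hd : ∀ y : ℝ, HasDerivAt Φ (deriv Φ y) y :=
      fun y => ((hΦ.differentiable one_ne_zero) y).hasDerivAt
    rcases le_or_gt 0 x with hpos | hneg
    · have := norm_image_sub_le_of_norm_deriv_le_segment'
        (f := Φ) (f' := deriv Φ) (a := 0) (b := x)
        (fun y _ => (hd y).hasDerivWithinAt)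
        (fun y hy => by
          have h1 : |y| ≤ |x| := by
            rw [abs_of_nonneg hy.1, abs_of_nonneg hpos]; exact hy.2.le
          calc ‖deriv Φ y‖ ≤ ε / 2 * |y| + C := hC y
            _ ≤ ε / 2 * |x| + C := by nlinarith)
        x (by constructor <;> simp [hpos])
      simpa [Real.norm_eq_abs, abs_of_nonneg hpos] using this
    · have := norm_image_sub_le_of_norm_deriv_le_segment'
        (f := Φ) (f' := deriv Φ) (a := x) (b := 0)
        (fun y _ => (hd y).hasDerivWithinAt)
        (fun y hy => by
          have h1 : |y| ≤ |x| := by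
            rw [abs_of_nonpos (hy.2.le), abs_of_neg hneg]; linarith [hy.1]
          calc ‖deriv Φ y‖ ≤ ε / 2 * |y| + C := hC y
            _ ≤ ε / 2 * |x| + C := by nlinarith)
        0 (by constructor <;> simp [hneg.le])
      calc |Φ x - Φ 0| = ‖Φ 0 - Φ x‖ := by rw [Real.norm_eq_abs, abs_sub_comm]
        _ ≤ (ε / 2 * |x| + C) * (0 - x) := this
        _ = (ε / 2 * |x| + C) * |x| := by rw [abs_of_neg hneg]; ring
  have hsq : |x| ^ 2 = x ^ 2 := sq_abs x
  have hexp : (ε / 2 * |x| + C) * |x| = ε / 2 * x ^ 2 + C * |x| := by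
    rw [← hsq]; ring
  have hkey : ε / 2 * x ^ 2 + C ^ 2 / (2 * ε) - C * |x| = (ε * |x| - C) ^ 2 / (2 * ε) := by
    field_simp; rw [← hsq]; ring
  have hpos : (0:ℝ) ≤ (ε * |x| - C) ^ 2 / (2 * ε) := by positivity
  linarith [hmvt, hexp ▸ hmvt]


section B
variable (a : ℝ) (Φ : ℝ → ℝ) (hΦ : ContDiff ℝ 1 Φ)
  (u u' : ℝ → ℝ → ℝ)

lemma energy_const
    (hΦ : ContDiff ℝ 1 Φ)
    (hu : ∀ lam > (0:ℝ), ∀ θ : ℝ, HasDerivAt (u lam) (u' lam θ) θ)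
    (hu' : ∀ lam > (0:ℝ), ∀ θ : ℝ, HasDerivAt (u' lam)
      (-(a * u lam θ + lam⁻¹ * deriv Φ (lam * u lam θ))) θ)
    (hu0 : ∀ lam > (0:ℝ), u lam 0 = 1) (hu'0 : ∀ lam > (0:ℝ), u' lam 0 = 0)
    {lam : ℝ} (hlam : 0 < lam) (θ : ℝ) :
    (u' lam θ) ^ 2 + a * (u lam θ) ^ 2 + 2 * lam⁻¹ * lam⁻¹ * Φ (lam * u lam θ)
      = a + 2 * lam⁻¹ * lam⁻¹ * Φ lam := by
  set E : ℝ → ℝ := fun θ =>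
    (u' lam θ) ^ 2 + a * (u lam θ) ^ 2 + 2 * lam⁻¹ * lam⁻¹ * Φ (lam * u lam θ) with hE
  have hlamne : lam ≠ 0 := ne_of_gt hlam
  have hD : ∀ θ : ℝ, HasDerivAt E 0 θ := by
    intro θ
    have h1 : HasDerivAt (fun θ => (u' lam θ) ^ 2)
        (2 * u' lam θ * (-(a * u lam θ + lam⁻¹ * deriv Φ (lam * u lam θ)))) θ := by
      have := ((hu' lam hlam θ).mul (hu' lam hlam θ))
      have e : (fun θ => (u' lam θ) ^ 2) = u' lam * u' lam := by funext x; simp [pow_two]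
      rw [e]; exact this.congr_deriv (by ring)
    have h2 : HasDerivAt (fun θ => a * (u lam θ) ^ 2) (a * (2 * u lam θ * u' lam θ)) θ := by
      have := ((hu lam hlam θ).mul (hu lam hlam θ)).const_mul a
      simpa [pow_two] using this.congr_deriv (by ring)
    have h3 : HasDerivAt (fun θ => Φ (lam * u lam θ))
        (deriv Φ (lam * u lam θ) * (lam * u' lam θ)) θ := by
      exact (((hΦ.differentiable one_ne_zero) (lam * u lam θ)).hasDerivAt).comp θ
        ((hu lam hlam θ).const_mul lam)
    have := (h1.add h2).add (h3.const_mul (2 * lam⁻¹ * lam⁻¹))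
    refine this.congr_deriv ?_
    field_simp
    ring
  have hconst : E θ = E 0 :=
    is_const_of_deriv_eq_zero (fun x => (hD x).differentiableAt) (fun x => (hD x).deriv) θ 0
  have : E 0 = a + 2 * lam⁻¹ * lam⁻¹ * Φ lam := by
    simp [hE, hu0 lam hlam, hu'0 lam hlam]
  rw [← this, ← hconst]

end B

lemma u_sq_bound (a : ℝ) (ha : 0 < a) (Φ : ℝ → ℝ) (hΦ : ContDiff ℝ 1 Φ)
    (hΦtop : Tendsto (fun x => deriv Φ x / x) atTop (𝓝 0))
    (hΦbot : Tendsto (fun x => deriv Φ x / x) atBot (𝓝 0))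
    (u u' : ℝ → ℝ → ℝ)
    (hu : ∀ lam > (0:ℝ), ∀ θ : ℝ, HasDerivAt (u lam) (u' lam θ) θ)
    (hu' : ∀ lam > (0:ℝ), ∀ θ : ℝ, HasDerivAt (u' lam)
      (-(a * u lam θ + lam⁻¹ * deriv Φ (lam * u lam θ))) θ)
    (hu0 : ∀ lam > (0:ℝ), u lam 0 = 1) (hu'0 : ∀ lam > (0:ℝ), u' lam 0 = 0) :
    ∃ B : ℝ, 0 ≤ B ∧ ∀ lam ≥ (1:ℝ), ∀ θ : ℝ, (u lam θ) ^ 2 ≤ B := by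
  obtain ⟨D, hD0, hD⟩ := Phi_quad_bound Φ hΦ hΦtop hΦbot (ε := a / 8) (by positivity)
  refine ⟨2 + 16 * D / a, by positivity, fun lam hlam θ => ?_⟩
  have hlam0 : (0:ℝ) < lam := lt_of_lt_of_le one_pos hlam
  have hlamne : lam ≠ 0 := ne_of_gt hlam0
  have hil : lam⁻¹ * lam = 1 := inv_mul_cancel₀ hlamne
  have hi0 : (0:ℝ) < lam⁻¹ := inv_pos.mpr hlam0
  have hi1 : lam⁻¹ ≤ 1 := by
    rw [inv_le_one_iff₀]; right; exact hlam
  set y := u lam θ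
  set p := u' lam θ
  set i := lam⁻¹
  have hen := energy_const a Φ u u' hΦ hu hu' hu0 hu'0 hlam0 θ
  have h1 := (abs_le.mp (hD lam)).2
  have h2 := (abs_le.mp (hD (lam * y))).1
  have main : a * y ^ 2 ≤ a + 2 * i * i * (Φ lam - Φ (lam * y)) := by
    nlinarith [hen, sq_nonneg p]
  have k1 : 2 * i * i * (Φ lam - Φ (lam * y))
      ≤ 2 * i * i * (a / 8 * lam ^ 2 + a / 8 * (lam * y) ^ 2 + 2 * D) := by
    apply mul_le_mul_of_nonneg_left (by linarith) (by positivity)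
  have k2 : 2 * i * i * (a / 8 * lam ^ 2 + a / 8 * (lam * y) ^ 2 + 2 * D)
      = a / 4 + a / 4 * y ^ 2 + 4 * D * (i * i) := by
    linear_combination (a / 4 * (1 + y ^ 2) * (i * lam + 1)) * hil
  have hii : i * i ≤ 1 := mul_le_one₀ hi1 hi0.le hi1
  have k3 : 4 * D * (i * i) ≤ 4 * D := by nlinarith [mul_le_mul_of_nonneg_left hii hD0]
  have k4 : a * y ^ 2 ≤ a + a / 4 + a / 4 * y ^ 2 + 4 * D := by linarith
  have k5 : y ^ 2 - 2 ≤ 16 * D / a := by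
    rw [le_div_iff₀ ha]; nlinarith [k4, ha]
  linarith

lemma pert_small (a : ℝ) (ha : 0 < a) (Φ : ℝ → ℝ) (hΦ : ContDiff ℝ 1 Φ)
    (hΦtop : Tendsto (fun x => deriv Φ x / x) atTop (𝓝 0))
    (hΦbot : Tendsto (fun x => deriv Φ x / x) atBot (𝓝 0))
    (u : ℝ → ℝ → ℝ) (B : ℝ) (hB0 : 0 ≤ B)
    (hB : ∀ lam ≥ (1:ℝ), ∀ θ : ℝ, (u lam θ) ^ 2 ≤ B)
    {δ : ℝ} (hδ : 0 < δ) :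
    ∃ Λ : ℝ, 1 ≤ Λ ∧ ∀ lam ≥ Λ, ∀ θ : ℝ,
      |lam⁻¹ * deriv Φ (lam * u lam θ)| ≤ δ := by
  have hε' : (0:ℝ) < δ / (2 * (Real.sqrt B + 1)) := by positivity
  obtain ⟨C, hC0, hC⟩ := derivPhi_lin_bound Φ hΦ hΦtop hΦbot hε'
  refine ⟨max 1 (2 * C / δ + 1), le_max_left _ _, fun lam hlam θ => ?_⟩
  have hlam1 : (1:ℝ) ≤ lam := le_trans (le_max_left _ _) hlam
  have hlam0 : (0:ℝ) < lam := lt_of_lt_of_le one_pos hlam1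
  have hi0 : (0:ℝ) < lam⁻¹ := inv_pos.mpr hlam0
  set y := u lam θ
  have hy : |y| ≤ Real.sqrt B := by
    rw [← Real.sqrt_sq_eq_abs]
    exact Real.sqrt_le_sqrt (hB lam hlam1 θ)
  have h1 : |lam⁻¹ * deriv Φ (lam * y)| = lam⁻¹ * |deriv Φ (lam * y)| := by
    rw [abs_mul, abs_of_pos hi0]
  have h2 : |deriv Φ (lam * y)| ≤ δ / (2 * (Real.sqrt B + 1)) * (lam * |y|) + C := by
    have := hC (lam * y)
    rwa [abs_mul, abs_of_pos hlam0] at this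
  have h3 : lam⁻¹ * (δ / (2 * (Real.sqrt B + 1)) * (lam * |y|) + C)
      = δ / (2 * (Real.sqrt B + 1)) * |y| + C * lam⁻¹ := by
    field_simp
  have h4 : δ / (2 * (Real.sqrt B + 1)) * |y| ≤ δ / 2 := by
    have hsB : (0:ℝ) ≤ Real.sqrt B := Real.sqrt_nonneg B
    have hy1 : |y| ≤ Real.sqrt B + 1 := by linarith
    have : δ / (2 * (Real.sqrt B + 1)) * (Real.sqrt B + 1) = δ / 2 := by
      field_simp
    calc δ / (2 * (Real.sqrt B + 1)) * |y|
        ≤ δ / (2 * (Real.sqrt B + 1)) * (Real.sqrt B + 1) :=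
          mul_le_mul_of_nonneg_left hy1 (le_of_lt hε')
      _ = δ / 2 := this
  have h5 : C * lam⁻¹ ≤ δ / 2 := by
    have hlam2 : 2 * C / δ + 1 ≤ lam := le_trans (le_max_right _ _) hlam
    have key := mul_le_mul_of_nonneg_left hlam2 (by positivity : (0:ℝ) ≤ δ / 2)
    have id1 : δ / 2 * (2 * C / δ + 1) = C + δ / 2 := by field_simp
    have hCl : C ≤ δ / 2 * lam := by linarith
    calc C * lam⁻¹ = C / lam := by rw [div_eq_mul_inv]
      _ ≤ δ / 2 := by rw [div_le_iff₀ hlam0]; linarith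
  calc |lam⁻¹ * deriv Φ (lam * y)| = lam⁻¹ * |deriv Φ (lam * y)| := h1
    _ ≤ lam⁻¹ * (δ / (2 * (Real.sqrt B + 1)) * (lam * |y|) + C) := by
        apply mul_le_mul_of_nonneg_left h2 (le_of_lt hi0)
    _ = δ / (2 * (Real.sqrt B + 1)) * |y| + C * lam⁻¹ := h3
    _ ≤ δ / 2 + δ / 2 := add_le_add h4 h5
    _ = δ := by ring


lemma gron_aux {aa Kc T δ : ℝ} (ha : 0 < aa) (hδ : 0 ≤ δ) (v w g : ℝ → ℝ)
    (hv : ∀ θ : ℝ, HasDerivAt v (w θ) θ)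
    (hw : ∀ θ : ℝ, HasDerivAt w (-(aa * v θ) - g θ) θ)
    (hv0 : v 0 = 0) (hw0 : w 0 = 0) (hg : ∀ θ : ℝ, |g θ| ≤ δ)
    (hKc : Kc = max 1 aa) :
    ∀ θ ∈ Icc (0:ℝ) T, |v θ| ≤ gronwallBound 0 Kc δ θ := by
  have hKc1 : 1 ≤ Kc := hKc ▸ le_max_left _ _
  have hKca : aa ≤ Kc := hKc ▸ le_max_right _ _
  set f : ℝ → ℝ × ℝ := fun θ => (v θ, w θ) with hf
  have hf' : ∀ θ : ℝ, HasDerivAt f (w θ, -(aa * v θ) - g θ) θ :=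
    fun θ => (hv θ).prodMk (hw θ)
  have hcont : ContinuousOn f (Icc 0 T) :=
    fun θ _ => ((hf' θ).continuousAt).continuousWithinAt
  have hbound : ∀ x ∈ Ico (0:ℝ) T,
      ‖(w x, -(aa * v x) - g x)‖ ≤ Kc * ‖f x‖ + δ := by
    intro x _
    have hnf : ‖f x‖ = max ‖v x‖ ‖w x‖ := rfl
    rw [Prod.norm_def]
    have h0 : (0:ℝ) ≤ ‖f x‖ := norm_nonneg _
    have hwle : ‖w x‖ ≤ ‖f x‖ := norm_snd_le (f x)
    have hvle : ‖v x‖ ≤ ‖f x‖ := norm_fst_le (f x)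
    apply max_le
    · nlinarith [hg x]
    · have : ‖-(aa * v x) - g x‖ ≤ aa * ‖v x‖ + |g x| := by
        calc ‖-(aa * v x) - g x‖ ≤ ‖-(aa * v x)‖ + ‖g x‖ := norm_sub_le _ _
          _ = aa * ‖v x‖ + |g x| := by
              simp [Real.norm_eq_abs, abs_mul, abs_of_pos ha]
      have h2 : aa * ‖v x‖ ≤ Kc * ‖f x‖ := by nlinarith [norm_nonneg (v x)]
      linarith [hg x]
  have key := norm_le_gronwallBound_of_norm_deriv_right_le (δ := 0) (K := Kc) (ε := δ) hcont
    (fun x _ => (hf' x).hasDerivWithinAt) (by simp [hf, hv0, hw0, Prod.norm_def]) hbound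
  intro θ hθ
  have := key θ hθ
  rw [sub_zero] at this
  exact le_trans (norm_fst_le (f θ)) this

lemma gb_le {Kc δ T θ : ℝ} (hK : 1 ≤ Kc) (hδ : 0 ≤ δ) (hθ0 : 0 ≤ θ) (hθT : θ ≤ T) :
    gronwallBound 0 Kc δ θ ≤ δ * Real.exp (Kc * T) := by
  have hKc0 : (0:ℝ) < Kc := lt_of_lt_of_le one_pos hK
  rw [gronwallBound_of_K_ne_0 (ne_of_gt hKc0)]
  have h1 : Real.exp (Kc * θ) ≤ Real.exp (Kc * T) := Real.exp_le_exp.mpr (by nlinarith)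
  have h2 : δ / Kc ≤ δ := div_le_self hδ hK
  have h3 : (0:ℝ) ≤ δ / Kc := div_nonneg hδ hKc0.le
  have h4 := mul_le_mul_of_nonneg_left h1 h3
  have h5 := mul_le_mul_of_nonneg_right h2 (Real.exp_pos (Kc * T)).le
  simp only [zero_mul, zero_add]
  nlinarith [Real.exp_pos (Kc * θ)]

end Aux

/-- rescaled solutions converge uniformly on compacts to cos(√a θ). -/
theorem rescaled_solutions_converge
    (a : ℝ) (ha : 0 < a)
    (Φ : ℝ → ℝ) (hΦ : ContDiff ℝ 1 Φ)
    (hΦtop : Tendsto (fun x => deriv Φ x / x) atTop (𝓝 0))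
    (hΦbot : Tendsto (fun x => deriv Φ x / x) atBot (𝓝 0))
    (u u' : ℝ → ℝ → ℝ)
    (hu : ∀ lam > (0:ℝ), ∀ θ : ℝ, HasDerivAt (u lam) (u' lam θ) θ)
    (hu' : ∀ lam > (0:ℝ), ∀ θ : ℝ, HasDerivAt (u' lam)
      (-(a * u lam θ + lam⁻¹ * deriv Φ (lam * u lam θ))) θ)
    (hu0 : ∀ lam > (0:ℝ), u lam 0 = 1) (hu'0 : ∀ lam > (0:ℝ), u' lam 0 = 0) :
    ∀ K : Set ℝ, IsCompact K →
      TendstoUniformlyOn (fun lam θ => u lam θ)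
        (fun θ => Real.cos (Real.sqrt a * θ)) atTop K := by

  intro K hK
  rw [Metric.tendstoUniformlyOn_iff]
  intro ε hε
  obtain ⟨r, hr⟩ := hK.isBounded.subset_closedBall 0
  set T : ℝ := max r 1 with hT
  have hT1 : (1:ℝ) ≤ T := le_max_right _ _
  have hKT : K ⊆ Icc (-T) T := by
    intro x hx
    have := hr hx
    rw [Real.closedBall_eq_Icc, zero_sub, zero_add] at this
    exact ⟨le_trans (neg_le_neg (le_max_left r 1)) this.1,
      le_trans this.2 (le_max_left r 1)⟩
  set Kc : ℝ := max 1 a with hKc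
  have hKc1 : (1:ℝ) ≤ Kc := le_max_left _ _
  set δ : ℝ := ε / (2 * Real.exp (Kc * T)) with hδdef
  have hδ : 0 < δ := by positivity
  obtain ⟨B, hB0, hB⟩ := u_sq_bound a ha Φ hΦ hΦtop hΦbot u u' hu hu' hu0 hu'0
  obtain ⟨Λ, hΛ1, hΛ⟩ := pert_small a ha Φ hΦ hΦtop hΦbot u B hB0 hB hδ
  have hfin : δ * Real.exp (Kc * T) = ε / 2 := by
    rw [hδdef]; field_simp
  filter_upwards [eventually_ge_atTop Λ] with lam hlam
  intro θ hθ
  have hlam1 : (1:ℝ) ≤ lam := le_trans hΛ1 hlam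
  have hlam0 : (0:ℝ) < lam := lt_of_lt_of_le one_pos hlam1
  set sa := Real.sqrt a with hsa_def
  have hsa : sa * sa = a := Real.mul_self_sqrt ha.le
  set v : ℝ → ℝ := fun s => u lam s - Real.cos (sa * s) with hvdef
  set w : ℝ → ℝ := fun s => u' lam s + sa * Real.sin (sa * s) with hwdef
  set g : ℝ → ℝ := fun s => lam⁻¹ * deriv Φ (lam * u lam s) with hgdef
  have hg : ∀ s : ℝ, |g s| ≤ δ := fun s => hΛ lam hlam s
  have hv : ∀ s : ℝ, HasDerivAt v (w s) s := by
    intro s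
    have hin : HasDerivAt (fun x : ℝ => sa * x) (sa * 1) s := (hasDerivAt_id s).const_mul sa
    have hcos := (Real.hasDerivAt_cos (sa * s)).comp s hin
    have := (hu lam hlam0 s).sub hcos
    refine this.congr_deriv ?_
    simp [hwdef]; ring
  have hw : ∀ s : ℝ, HasDerivAt w (-(a * v s) - g s) s := by
    intro s
    have hin : HasDerivAt (fun x : ℝ => sa * x) (sa * 1) s := (hasDerivAt_id s).const_mul sa
    have hsin := ((Real.hasDerivAt_sin (sa * s)).comp s hin).const_mul sa
    have := (hu' lam hlam0 s).add hsin
    refine this.congr_deriv ?_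
    simp only [hvdef, hgdef]
    linear_combination (Real.cos (sa * s)) * hsa
  have hv0 : v 0 = 0 := by simp [hvdef, hu0 lam hlam0]
  have hw0 : w 0 = 0 := by simp [hwdef, hu'0 lam hlam0]
  have hmem := hKT hθ
  have hvb : |v θ| ≤ δ * Real.exp (Kc * T) := by
    rcases le_or_gt 0 θ with hpos | hneg
    · have h1 := gron_aux (T := T) ha hδ.le v w g hv hw hv0 hw0 hg hKc θ ⟨hpos, hmem.2⟩
      exact le_trans h1 (gb_le hKc1 hδ.le hpos hmem.2)
    · set v2 : ℝ → ℝ := fun s => v (-s) with hv2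
      set w2 : ℝ → ℝ := fun s => -w (-s) with hw2
      set g2 : ℝ → ℝ := fun s => g (-s) with hg2
      have hvv : ∀ s : ℝ, HasDerivAt v2 (w2 s) s := by
        intro s
        have := (hv (-s)).comp s (hasDerivAt_neg s)
        refine this.congr_deriv ?_
        simp [hw2]
      have hww : ∀ s : ℝ, HasDerivAt w2 (-(a * v2 s) - g2 s) s := by
        intro s
        have := ((hw (-s)).comp s (hasDerivAt_neg s)).neg
        refine this.congr_deriv ?_
        simp [hv2, hg2]; ring
      have hgg : ∀ s : ℝ, |g2 s| ≤ δ := fun s => hg (-s)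
      have hθ2 : -θ ∈ Icc (0:ℝ) T := ⟨by linarith, by linarith [hmem.1]⟩
      have h1 := gron_aux (T := T) ha hδ.le v2 w2 g2 hvv hww
        (by simp [hv2, hv0]) (by simp [hw2, hw0]) hgg hKc (-θ) hθ2
      have h2 : |v θ| = |v2 (-θ)| := by simp [hv2]
      rw [h2]
      exact le_trans h1 (gb_le hKc1 hδ.le hθ2.1 hθ2.2)
  have : dist (Real.cos (sa * θ)) (u lam θ) = |v θ| := by
    rw [Real.dist_eq, hvdef]
    simp [abs_sub_comm]
  rw [this]
  calc |v θ| ≤ δ * Real.exp (Kc * T) := hvb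
    _ = ε / 2 := hfin
    _ < ε := by linarith
end
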